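/- Let y : [0,1] → ℂ be such that y and y′ are absolutely continuous, y″ ∈ L¹[0,1], y(0) = y(1) and y′(0) = y′(1). Then the following are equivalent: (a) for every continuously differentiable z : [0,1] → ℂ with z(0) = z(1), one has ∫₀¹ [ (i y″ + p y′ − q y) conj(z′) − q y′ conj(z) ] dx = ∫₀¹ f conj(z) dx; (b) there exists an absolutely continuous function u : [0,1] → ℂ with u(0) = u(1) such that, for almost every x ∈ [0,1]: y″ = −i q y + i p y′ − i u and u′ = −q y′ − f. -/

import Mathlib

open MeasureTheory Set
noncomputable section

/-- `g` is absolutely continuous on `[0,1]` with a.e. derivative `g'`, via the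
integral representation. -/
def ACWithDeriv (g g' : ℝ → ℂ) : Prop :=
  IntegrableOn g' (Set.Icc 0 1) ∧
  ∀ x ∈ Set.Icc (0:ℝ) 1, g x = g 0 + ∫ t in (0:ℝ)..x, g' t

namespace S15

lemma contPrim {g : ℝ → ℂ} (hg : IntegrableOn g (Icc 0 1)) :
    ContinuousOn (fun x => ∫ t in (0:ℝ)..x, g t) (Icc 0 1) := by
  have h := intervalIntegral.continuousOn_primitive_interval
    (a := (0:ℝ)) (b := 1) (f := g) (μ := volume) (by rwa [uIcc_of_le zero_le_one])
  rwa [uIcc_of_le zero_le_one] at h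

lemma contAC {g g' : ℝ → ℂ} (h : ACWithDeriv g g') : ContinuousOn g (Icc 0 1) :=
  ((continuousOn_const (c := g 0)).add (contPrim h.1)).congr (fun x hx => h.2 x hx)

lemma ibp {g h : ℝ → ℂ} {G H : ℝ → ℂ}
    (hg : IntegrableOn g (Icc 0 1)) (hh : IntegrableOn h (Icc 0 1))
    (hG : ∀ x ∈ Icc (0:ℝ) 1, G x = G 0 + ∫ t in (0:ℝ)..x, g t)
    (hH : ∀ x ∈ Icc (0:ℝ) 1, H x = H 0 + ∫ t in (0:ℝ)..x, h t) :
    (∫ x in Icc (0:ℝ) 1, (G x * h x + g x * H x)) = G 1 * H 1 - G 0 * H 0 := by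
  have hg1 : IntegrableOn g (Ioc (0:ℝ) 1) := hg.mono_set Ioc_subset_Icc_self
  have hh1 : IntegrableOn h (Ioc (0:ℝ) 1) := hh.mono_set Ioc_subset_Icc_self
  set Ig := ∫ t in Ioc (0:ℝ) 1, g t with hIg
  set Ih := ∫ t in Ioc (0:ℝ) 1, h t with hIh
  have hPg : ContinuousOn (fun x => ∫ t in (0:ℝ)..x, g t) (Icc 0 1) := contPrim hg
  have hPh : ContinuousOn (fun x => ∫ t in (0:ℝ)..x, h t) (Icc 0 1) := contPrim hh
  have hGc : ContinuousOn G (Icc 0 1) := (continuousOn_const.add hPg).congr hG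
  have hHc : ContinuousOn H (Icc 0 1) := (continuousOn_const.add hPh).congr hH
  have hPgh : IntegrableOn (fun x => (∫ t in (0:ℝ)..x, g t) * h x) (Ioc (0:ℝ) 1) :=
    hh1.continuousOn_mul_of_subset hPg isCompact_Icc measurableSet_Ioc Ioc_subset_Icc_self
  have hgPh : IntegrableOn (fun x => g x * (∫ t in (0:ℝ)..x, h t)) (Ioc (0:ℝ) 1) :=
    hg1.mul_continuousOn_of_subset hPh measurableSet_Ioc isCompact_Icc Ioc_subset_Icc_self
  -- Step 1: reduce to Ioc and expand G, H.
  have step1 : (∫ x in Icc (0:ℝ) 1, (G x * h x + g x * H x))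
      = (G 0 * Ih + ∫ x in Ioc (0:ℝ) 1, (∫ t in (0:ℝ)..x, g t) * h x)
      + (H 0 * Ig + ∫ x in Ioc (0:ℝ) 1, g x * (∫ t in (0:ℝ)..x, h t)) := by
    rw [integral_Icc_eq_integral_Ioc]
    have : ∀ x ∈ Ioc (0:ℝ) 1, G x * h x + g x * H x
        = (G 0 * h x + (∫ t in (0:ℝ)..x, g t) * h x)
          + (H 0 * g x + g x * (∫ t in (0:ℝ)..x, h t)) := by
      intro x hx
      rw [hG x (Ioc_subset_Icc_self hx), hH x (Ioc_subset_Icc_self hx)]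
      ring
    rw [setIntegral_congr_fun measurableSet_Ioc this]
    have i1 : IntegrableOn (fun x => G 0 * h x) (Ioc (0:ℝ) 1) := hh1.const_mul _
    have i2 : IntegrableOn (fun x => H 0 * g x) (Ioc (0:ℝ) 1) := hg1.const_mul _
    have i3 : IntegrableOn
        (fun x => G 0 * h x + (∫ t in (0:ℝ)..x, g t) * h x) (Ioc (0:ℝ) 1) := by
      exact i1.add hPgh
    have i4 : IntegrableOn
        (fun x => H 0 * g x + g x * (∫ t in (0:ℝ)..x, h t)) (Ioc (0:ℝ) 1) := by
      exact i2.add hgPh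
    rw [integral_add i3 i4, integral_add i1 hPgh, integral_add i2 hgPh,
      integral_const_mul, integral_const_mul]
  -- Fubini setup
  set ν := volume.restrict (Ioc (0:ℝ) 1) with hνdef
  have hg2 : Integrable g ν := hg1
  have hh2 : Integrable h ν := hh1
  have hΦ : Integrable (fun p : ℝ × ℝ => h p.1 * g p.2) (ν.prod ν) :=
    Integrable.mul_prod hh2 hg2
  have hΨ : Integrable (fun p : ℝ × ℝ => g p.1 * h p.2) (ν.prod ν) :=
    Integrable.mul_prod hg2 hh2
  have hmle : MeasurableSet {p : ℝ × ℝ | p.2 ≤ p.1} :=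
    measurableSet_le measurable_snd measurable_fst
  have hmlt : MeasurableSet {p : ℝ × ℝ | p.2 < p.1} :=
    measurableSet_lt measurable_snd measurable_fst
  have hmlt' : MeasurableSet {p : ℝ × ℝ | p.1 < p.2} :=
    measurableSet_lt measurable_fst measurable_snd
  have hF1 : Integrable (fun p : ℝ × ℝ => if p.2 ≤ p.1 then g p.2 * h p.1 else 0)
      (ν.prod ν) := by
    have := hΦ.indicator hmle
    refine this.congr (Filter.Eventually.of_forall fun p => ?_)
    by_cases hp : p.2 ≤ p.1 <;> simp [Set.indicator_apply, hp, mul_comm]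
  have hF2 : Integrable (fun p : ℝ × ℝ => if p.2 < p.1 then g p.1 * h p.2 else 0)
      (ν.prod ν) := by
    have := hΨ.indicator hmlt
    refine this.congr (Filter.Eventually.of_forall fun p => ?_)
    by_cases hp : p.2 < p.1 <;> simp [Set.indicator_apply, hp]
  have hF2' : Integrable (fun p : ℝ × ℝ => if p.1 < p.2 then g p.2 * h p.1 else 0)
      (ν.prod ν) := by
    have := hΦ.indicator hmlt'
    refine this.congr (Filter.Eventually.of_forall fun p => ?_)
    by_cases hp : p.1 < p.2 <;> simp [Set.indicator_apply, hp, mul_comm]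
  -- J1
  have hJ1 : (∫ x in Ioc (0:ℝ) 1, (∫ t in (0:ℝ)..x, g t) * h x)
      = ∫ p : ℝ × ℝ, (if p.2 ≤ p.1 then g p.2 * h p.1 else 0) ∂(ν.prod ν) := by
    have e1 : ∀ x ∈ Ioc (0:ℝ) 1, (∫ t in (0:ℝ)..x, g t) * h x
        = ∫ t in Ioc (0:ℝ) 1, (if t ≤ x then g t * h x else 0) := by
      intro x hx
      rw [intervalIntegral.integral_of_le hx.1.le, ← integral_mul_const]
      have hset : Ioc (0:ℝ) 1 ∩ Iic x = Ioc 0 x := by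
        rw [Ioc_inter_Iic, min_eq_right hx.2]
      rw [← hset, ← setIntegral_indicator measurableSet_Iic]
      refine setIntegral_congr_fun measurableSet_Ioc fun t _ => ?_
      by_cases htx : t ≤ x <;> simp [Set.indicator_apply, htx]
    rw [setIntegral_congr_fun measurableSet_Ioc e1]
    exact integral_integral (f := fun x t => if t ≤ x then g t * h x else 0)
      (by refine hF1.congr (Filter.Eventually.of_forall fun p => rfl))
  -- J2
  have hJ2 : (∫ x in Ioc (0:ℝ) 1, g x * (∫ t in (0:ℝ)..x, h t))
      = ∫ p : ℝ × ℝ, (if p.2 < p.1 then g p.1 * h p.2 else 0) ∂(ν.prod ν) := by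
    have e2 : ∀ x ∈ Ioc (0:ℝ) 1, g x * (∫ t in (0:ℝ)..x, h t)
        = ∫ t in Ioc (0:ℝ) 1, (if t < x then g x * h t else 0) := by
      intro x hx
      rw [intervalIntegral.integral_of_le hx.1.le, integral_Ioc_eq_integral_Ioo,
        ← integral_const_mul]
      have hset : Ioc (0:ℝ) 1 ∩ Iio x = Ioo 0 x := by
        ext s
        simp only [mem_inter_iff, mem_Ioc, mem_Iio, mem_Ioo]
        exact ⟨fun hs => ⟨hs.1.1, hs.2⟩, fun hs => ⟨⟨hs.1, le_of_lt (lt_of_lt_of_le hs.2 hx.2)⟩, hs.2⟩⟩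
      rw [← hset, ← setIntegral_indicator measurableSet_Iio]
      refine setIntegral_congr_fun measurableSet_Ioc fun t _ => ?_
      by_cases htx : t < x <;> simp [Set.indicator_apply, htx]
    rw [setIntegral_congr_fun measurableSet_Ioc e2]
    exact integral_integral (f := fun x t => if t < x then g x * h t else 0)
      (by refine hF2.congr (Filter.Eventually.of_forall fun p => rfl))
  -- swap the second double integral
  have hswap : (∫ p : ℝ × ℝ, (if p.2 < p.1 then g p.1 * h p.2 else 0) ∂(ν.prod ν))
      = ∫ p : ℝ × ℝ, (if p.1 < p.2 then g p.2 * h p.1 else 0) ∂(ν.prod ν) := by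
    rw [← integral_prod_swap (μ := ν) (ν := ν)
      (f := fun p : ℝ × ℝ => if p.2 < p.1 then g p.1 * h p.2 else 0)]
    rfl
  -- sum of the two double integrals
  have hsum : (∫ p : ℝ × ℝ, (if p.2 ≤ p.1 then g p.2 * h p.1 else 0) ∂(ν.prod ν))
      + (∫ p : ℝ × ℝ, (if p.1 < p.2 then g p.2 * h p.1 else 0) ∂(ν.prod ν)) = Ih * Ig := by
    rw [← integral_add hF1 hF2']
    have : ∀ p : ℝ × ℝ, ((if p.2 ≤ p.1 then g p.2 * h p.1 else 0)
        + (if p.1 < p.2 then g p.2 * h p.1 else 0)) = h p.1 * g p.2 := by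
      intro p
      rcases le_or_gt p.2 p.1 with hp | hp
      · simp [hp, not_lt.2 hp, mul_comm]
      · simp [not_le.2 hp, hp, mul_comm]
    simp_rw [this]
    exact integral_prod_mul h g
  have hG1 : G 1 = G 0 + Ig := by
    rw [hG 1 (by constructor <;> norm_num), hIg, intervalIntegral.integral_of_le zero_le_one]
  have hH1 : H 1 = H 0 + Ih := by
    rw [hH 1 (by constructor <;> norm_num), hIh, intervalIntegral.integral_of_le zero_le_one]
  rw [step1, hJ1, hJ2, hswap, hG1, hH1]
  linear_combination hsum


lemma starRep {z z' : ℝ → ℂ}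
    (hzrep : ∀ x ∈ Icc (0:ℝ) 1, z x = z 0 + ∫ t in (0:ℝ)..x, z' t) :
    ∀ x ∈ Icc (0:ℝ) 1, star (z x) = star (z 0) + ∫ t in (0:ℝ)..x, star (z' t) := by
  intro x hx
  rw [hzrep x hx, star_add]
  congr 1
  rw [intervalIntegral.integral_of_le hx.1, intervalIntegral.integral_of_le hx.1]
  exact integral_conj.symm

instance : IsFiniteMeasure (volume.restrict (Icc (0:ℝ) 1)) := by
  constructor
  rw [Measure.restrict_apply_univ, Real.volume_Icc]
  norm_num

lemma dbr {W : ℝ → ℂ} (hW : IntegrableOn W (Icc 0 1))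
    (h : ∀ z' : ℝ → ℂ, ContinuousOn z' (Icc 0 1) → (∫ t in (0:ℝ)..1, z' t) = 0 →
      (∫ x in Icc (0:ℝ) 1, W x * star (z' x)) = 0) :
    ∀ᵐ x ∂(volume.restrict (Icc (0:ℝ) 1)), W x = (∫ t in Icc (0:ℝ) 1, W t) := by
  set C := ∫ t in Icc (0:ℝ) 1, W t with hC
  have hWC : Integrable (fun x => W x - C) (volume.restrict (Icc (0:ℝ) 1)) :=
    hW.sub (integrable_const _)
  have key : ∀ᵐ x ∂(volume.restrict (Icc (0:ℝ) 1)), W x - C = 0 := by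
    apply ae_eq_zero_of_integral_contDiff_smul_eq_zero hWC.locallyIntegrable
    intro ψ hψ _
    -- test function z' := ψ - ∫₀¹ ψ
    set c0 : ℂ := ∫ t in (0:ℝ)..1, (ψ t : ℂ) with hc0
    have hc0real : c0 = ((∫ t in (0:ℝ)..1, ψ t : ℝ) : ℂ) := by
      rw [hc0, intervalIntegral.integral_ofReal]
    have hcont : Continuous (fun t => ((ψ t : ℂ))) := Complex.continuous_ofReal.comp hψ.continuous
    have hz' : ContinuousOn (fun t => (ψ t : ℂ) - c0) (Icc 0 1) :=
      hcont.continuousOn.sub continuousOn_const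
    have hint0 : (∫ t in (0:ℝ)..1, ((ψ t : ℂ) - c0)) = 0 := by
      rw [intervalIntegral.integral_sub (hcont.intervalIntegrable 0 1)
        (intervalIntegrable_const)]
      simp [hc0]
    have h0 := h _ hz' hint0
    -- rewrite into the smul form
    have hψW : IntegrableOn (fun x => W x * (ψ x : ℂ)) (Icc (0:ℝ) 1) :=
      hW.mul_continuousOn hcont.continuousOn isCompact_Icc
    have hCψ : IntegrableOn (fun x => C * (ψ x : ℂ)) (Icc (0:ℝ) 1) :=
      (hcont.continuousOn.integrableOn_Icc).const_mul C
    have expand : (∫ x in Icc (0:ℝ) 1, W x * ((ψ x : ℂ) - star c0))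
        = (∫ x in Icc (0:ℝ) 1, W x * (ψ x : ℂ)) - star c0 * C := by
      have : ∀ x, W x * ((ψ x : ℂ) - star c0) = W x * (ψ x : ℂ) - star c0 * W x := by
        intro x; ring
      simp_rw [this]
      rw [integral_sub hψW (hW.const_mul _), integral_const_mul]
    have h0' : (∫ x in Icc (0:ℝ) 1, W x * (ψ x : ℂ)) = star c0 * C := by
      have : (∫ x in Icc (0:ℝ) 1, W x * star ((ψ x : ℂ) - c0))
          = ∫ x in Icc (0:ℝ) 1, W x * ((ψ x : ℂ) - star c0) := by
        refine integral_congr_ae (Filter.Eventually.of_forall fun x => ?_)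
        simp [Complex.conj_ofReal, sub_eq_add_neg]
      rw [this, expand] at h0
      linear_combination h0
    have hstarc0 : star c0 = c0 := by
      rw [hc0real]; exact Complex.conj_ofReal _
    have hicc : (∫ x in Icc (0:ℝ) 1, (ψ x : ℂ)) = c0 := by
      rw [hc0, intervalIntegral.integral_of_le zero_le_one, integral_Icc_eq_integral_Ioc]
    calc (∫ x in Icc (0:ℝ) 1, ψ x • (W x - C))
        = ∫ x in Icc (0:ℝ) 1, (W x * (ψ x : ℂ) - C * (ψ x : ℂ)) := by
          refine integral_congr_ae (Filter.Eventually.of_forall fun x => ?_)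
          simp only [Complex.real_smul]; ring
      _ = (∫ x in Icc (0:ℝ) 1, W x * (ψ x : ℂ)) - C * ∫ x in Icc (0:ℝ) 1, (ψ x : ℂ) := by
          rw [integral_sub hψW hCψ, integral_const_mul]
      _ = 0 := by rw [h0', hicc, hstarc0]; ring
  filter_upwards [key] with x hx
  have := sub_eq_zero.mp hx
  simpa [hC] using this

end S15

theorem stmt15
    (p q : ℝ → ℂ)
    (hp : IntegrableOn p (Set.Icc 0 1)) (hq : IntegrableOn q (Set.Icc 0 1))
    (f : ℝ → ℂ) (hf : MemLp f 2 (volume.restrict (Set.Icc 0 1)))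
    (y y' y'' : ℝ → ℂ)
    (hy : ACWithDeriv y y') (hy' : ACWithDeriv y' y'')
    (hy'' : IntegrableOn y'' (Set.Icc 0 1))
    (hbc : y 0 = y 1 ∧ y' 0 = y' 1) :
    -- (a) the integral identity holds for all C¹ test functions z with z(0)=z(1)
    (∀ z z' : ℝ → ℂ, ContinuousOn z' (Set.Icc 0 1) →
      (∀ x ∈ Set.Icc (0:ℝ) 1, z x = z 0 + ∫ t in (0:ℝ)..x, z' t) →
      z 0 = z 1 →
      (∫ x in Set.Icc (0:ℝ) 1,
          ((Complex.I * y'' x + p x * y' x - q x * y x) * star (z' x)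
            - q x * y' x * star (z x)))
        = ∫ x in Set.Icc (0:ℝ) 1, f x * star (z x))
    ↔
    -- (b) the first-order system holds
    (∃ u u' : ℝ → ℂ, ACWithDeriv u u' ∧ u 0 = u 1 ∧
      (∀ᵐ x ∂(volume.restrict (Set.Icc 0 1)),
        y'' x = -Complex.I * q x * y x + Complex.I * p x * y' x - Complex.I * u x ∧
        u' x = -(q x) * y' x - f x)) := by
  have hyC : ContinuousOn y (Icc 0 1) := S15.contAC hy
  have hy'C : ContinuousOn y' (Icc 0 1) := S15.contAC hy'
  have hfInt : IntegrableOn f (Icc (0:ℝ) 1) := hf.integrable (by norm_num)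
  have hqy' : IntegrableOn (fun x => q x * y' x) (Icc (0:ℝ) 1) :=
    hq.mul_continuousOn hy'C isCompact_Icc
  have hUInt : IntegrableOn
      (fun x => Complex.I * y'' x + p x * y' x - q x * y x) (Icc (0:ℝ) 1) := by
    exact ((hy''.const_mul _).add (hp.mul_continuousOn hy'C isCompact_Icc)).sub
      (hq.mul_continuousOn hyC isCompact_Icc)
  set w' : ℝ → ℂ := fun t => -(q t * y' t) - f t with hw'def
  have hw'Int : IntegrableOn w' (Icc (0:ℝ) 1) := by exact (hqy'.neg).sub hfInt
  constructor
  · -- (a) → (b)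
    intro ha
    -- constant test function: ∫ (q y' + f) = 0
    have hsum0 : (∫ x in Icc (0:ℝ) 1, q x * y' x) + (∫ x in Icc (0:ℝ) 1, f x) = 0 := by
      have hconst := ha (fun _ => 1) (fun _ => 0) continuousOn_const
        (by intro x hx; simp) rfl
      simp only [star_zero, mul_zero, star_one, mul_one, zero_sub] at hconst
      rw [integral_neg] at hconst
      linear_combination -hconst
    set v : ℝ → ℂ := fun x => ∫ t in (0:ℝ)..x, w' t with hvdef
    have hv0 : v 0 = 0 := by simp [hvdef]
    have hv1 : v 1 = 0 := by
      rw [hvdef]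
      simp only
      rw [intervalIntegral.integral_of_le zero_le_one, ← integral_Icc_eq_integral_Ioc]
      have hn : IntegrableOn (fun x => -(q x * y' x)) (Icc (0:ℝ) 1) := by
        exact hqy'.neg
      have hb : (∫ x in Icc (0:ℝ) 1, w' x)
          = ∫ x in Icc (0:ℝ) 1, (-(q x * y' x) - f x) := rfl
      have : (∫ x in Icc (0:ℝ) 1, w' x)
          = -((∫ x in Icc (0:ℝ) 1, q x * y' x) + (∫ x in Icc (0:ℝ) 1, f x)) := by
        rw [hb, integral_sub hn hfInt,
          integral_neg (f := fun x => q x * y' x)]; ring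
      rw [this, hsum0, neg_zero]
    have hvrep : ∀ x ∈ Icc (0:ℝ) 1, v x = v 0 + ∫ t in (0:ℝ)..x, w' t := by
      intro x hx; rw [hv0, zero_add]
    have hvC : ContinuousOn v (Icc 0 1) := S15.contPrim hw'Int
    have hvInt : IntegrableOn v (Icc (0:ℝ) 1) := hvC.integrableOn_Icc
    -- the key claim: ∫ (U - v) conj z' = 0 for all admissible z'
    have claim : ∀ z' : ℝ → ℂ, ContinuousOn z' (Icc 0 1) → (∫ t in (0:ℝ)..1, z' t) = 0 →
        (∫ x in Icc (0:ℝ) 1,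
          ((fun x => (Complex.I * y'' x + p x * y' x - q x * y x) - v x) x)
            * star (z' x)) = 0 := by
      intro z' hz'c hz'0
      set z : ℝ → ℂ := fun x => ∫ t in (0:ℝ)..x, z' t with hzdef
      have hz0 : z 0 = 0 := by simp [hzdef]
      have hzrep : ∀ x ∈ Icc (0:ℝ) 1, z x = z 0 + ∫ t in (0:ℝ)..x, z' t := by
        intro x hx; rw [hz0, zero_add]
      have hz1 : z 1 = 0 := by simpa [hzdef] using hz'0
      have hz01 : z 0 = z 1 := hz0.trans hz1.symm
      have hA := ha z z' hz'c hzrep hz01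
      have hzC : ContinuousOn z (Icc 0 1) := S15.contPrim hz'c.integrableOn_Icc
      have hszC : ContinuousOn (fun x => star (z x)) (Icc 0 1) :=
        continuous_star.comp_continuousOn hzC
      have hsz'C : ContinuousOn (fun x => star (z' x)) (Icc 0 1) :=
        continuous_star.comp_continuousOn hz'c
      have hsz'Int : IntegrableOn (fun x => star (z' x)) (Icc (0:ℝ) 1) :=
        hsz'C.integrableOn_Icc
      -- integration by parts for v against conj z
      have hibp := S15.ibp hw'Int hsz'Int hvrep (S15.starRep hzrep)
      rw [hv1, hv0, zero_mul, zero_mul, sub_zero] at hibp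
      -- integrabilities for splitting
      have i1 : IntegrableOn (fun x => v x * star (z' x)) (Icc (0:ℝ) 1) :=
        (hvC.mul hsz'C).integrableOn_Icc
      have i2 : IntegrableOn (fun x => w' x * star (z x)) (Icc (0:ℝ) 1) :=
        hw'Int.mul_continuousOn hszC isCompact_Icc
      have i3 : IntegrableOn (fun x =>
          (Complex.I * y'' x + p x * y' x - q x * y x) * star (z' x)) (Icc (0:ℝ) 1) :=
        hUInt.mul_continuousOn hsz'C isCompact_Icc
      have i4 : IntegrableOn (fun x => q x * y' x * star (z x)) (Icc (0:ℝ) 1) :=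
        hqy'.mul_continuousOn hszC isCompact_Icc
      have i5 : IntegrableOn (fun x => f x * star (z x)) (Icc (0:ℝ) 1) :=
        hfInt.mul_continuousOn hszC isCompact_Icc
      rw [integral_add i1 i2] at hibp
      rw [show (fun x => ((fun x => (Complex.I * y'' x + p x * y' x - q x * y x) - v x) x)
          * star (z' x))
        = fun x => (Complex.I * y'' x + p x * y' x - q x * y x) * star (z' x)
          - v x * star (z' x) from by funext x; ring]
      rw [integral_sub i3 i1]
      rw [integral_sub i3 i4] at hA
      -- ∫ w' conj z = -∫ q y' conj z - ∫ f conj z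
      have hw'z : (∫ x in Icc (0:ℝ) 1, w' x * star (z x))
          = -(∫ x in Icc (0:ℝ) 1, q x * y' x * star (z x))
            - ∫ x in Icc (0:ℝ) 1, f x * star (z x) := by
        have : ∀ x, w' x * star (z x)
            = -(q x * y' x * star (z x)) - f x * star (z x) := by
          intro x; simp only [hw'def]; ring
        simp_rw [this]
        have hn4 : IntegrableOn (fun x => -(q x * y' x * star (z x))) (Icc (0:ℝ) 1) := by
          exact i4.neg
        rw [integral_sub hn4 i5, integral_neg (f := fun x => q x * y' x * star (z x))]
      rw [hw'z] at hibp
      linear_combination hA - hibp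
    have hae := S15.dbr (hUInt.sub hvInt) claim
    set C : ℂ := ∫ t in Icc (0:ℝ) 1,
      ((fun x => (Complex.I * y'' x + p x * y' x - q x * y x) - v x) t) with hCdef
    refine ⟨fun x => C + v x, w', ⟨hw'Int, ?_⟩, ?_, ?_⟩
    · intro x hx
      show C + v x = C + v 0 + ∫ t in (0:ℝ)..x, w' t
      rw [hv0, add_zero]
    · show C + v 0 = C + v 1
      rw [hv0, hv1]
    · filter_upwards [hae] with x hx
      constructor
      · have hx' : Complex.I * y'' x + p x * y' x - q x * y x - v x = C := hx
        linear_combination (-Complex.I) * hx' + y'' x * Complex.I_sq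
      · simp only [hw'def]; ring
  · -- (b) → (a)
    rintro ⟨u, u', ⟨hu'Int, hurep⟩, huper, huae⟩ z z' hz'c hzrep hzper
    have huC : ContinuousOn u (Icc 0 1) := S15.contAC ⟨hu'Int, hurep⟩
    have hzC : ContinuousOn z (Icc 0 1) :=
      (continuousOn_const.add (S15.contPrim hz'c.integrableOn_Icc)).congr hzrep
    have hszC : ContinuousOn (fun x => star (z x)) (Icc 0 1) :=
      continuous_star.comp_continuousOn hzC
    have hsz'C : ContinuousOn (fun x => star (z' x)) (Icc 0 1) :=
      continuous_star.comp_continuousOn hz'c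
    have hsz'Int : IntegrableOn (fun x => star (z' x)) (Icc (0:ℝ) 1) :=
      hsz'C.integrableOn_Icc
    have i1 : IntegrableOn (fun x => u x * star (z' x)) (Icc (0:ℝ) 1) :=
      (huC.mul hsz'C).integrableOn_Icc
    have i2 : IntegrableOn (fun x => u' x * star (z x)) (Icc (0:ℝ) 1) :=
      hu'Int.mul_continuousOn hszC isCompact_Icc
    have i4 : IntegrableOn (fun x => q x * y' x * star (z x)) (Icc (0:ℝ) 1) :=
      hqy'.mul_continuousOn hszC isCompact_Icc
    have i5 : IntegrableOn (fun x => f x * star (z x)) (Icc (0:ℝ) 1) :=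
      hfInt.mul_continuousOn hszC isCompact_Icc
    -- replace the second-order expression by u using the a.e. identity
    have step1 : (∫ x in Icc (0:ℝ) 1,
        ((Complex.I * y'' x + p x * y' x - q x * y x) * star (z' x)
          - q x * y' x * star (z x)))
        = ∫ x in Icc (0:ℝ) 1, (u x * star (z' x) - q x * y' x * star (z x)) := by
      refine integral_congr_ae ?_
      filter_upwards [huae] with x hx
      have h1 : Complex.I * y'' x + p x * y' x - q x * y x = u x := by
        linear_combination Complex.I * hx.1 + (p x * y' x - q x * y x - u x) * Complex.I_sq
      rw [h1]
    -- integration by parts for u against conj z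
    have hibp := S15.ibp hu'Int hsz'Int hurep (S15.starRep hzrep)
    rw [← huper, ← hzper, sub_self] at hibp
    rw [integral_add i1 i2] at hibp
    -- rewrite u' a.e.
    have step2 : (∫ x in Icc (0:ℝ) 1, u' x * star (z x))
        = -(∫ x in Icc (0:ℝ) 1, q x * y' x * star (z x))
          - ∫ x in Icc (0:ℝ) 1, f x * star (z x) := by
      have : (∫ x in Icc (0:ℝ) 1, u' x * star (z x))
          = ∫ x in Icc (0:ℝ) 1, (-(q x * y' x * star (z x)) - f x * star (z x)) := by
        refine integral_congr_ae ?_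
        filter_upwards [huae] with x hx
        rw [hx.2]; ring
      have hn4 : IntegrableOn (fun x => -(q x * y' x * star (z x))) (Icc (0:ℝ) 1) := by
        exact i4.neg
      rw [this, integral_sub hn4 i5, integral_neg (f := fun x => q x * y' x * star (z x))]
    rw [step1, integral_sub i1 i4]
    rw [step2] at hibp
    linear_combination hibp

end
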